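/- Let ε ∈ (0, 1/2) and α ∈ (0, 1). Then f_GA(0, ε, α) ≥ ε·α^(dv-1) > 0; in particular x = 0 is not a fixed point of x ↦ f_GA(x, ε, α), so the asymptotic decoding error probability of the Gallager A decoder with missing connections cannot be driven to zero. -/

import Mathlib

/-- Probability that a check-to-variable message is "?". -/
noncomputable def p0 (dc : ℕ) (α : ℝ) : ℝ := 1 - (1 - α) ^ (dc - 1)

/-- Probability that a check-to-variable message is `+1`. -/
noncomputable def pPlus (dc : ℕ) (α x : ℝ) : ℝ :=
  (1 - α) ^ (dc - 1) * (1 + (1 - 2 * x) ^ (dc - 1)) / 2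

/-- Probability that a check-to-variable message is `-1`. -/
noncomputable def pMinus (dc : ℕ) (α x : ℝ) : ℝ :=
  (1 - α) ^ (dc - 1) * (1 - (1 - 2 * x) ^ (dc - 1)) / 2

/-- Density evolution map of the Gallager A decoder with missing connections
for the (dv,dc)-regular LDPC ensemble over the BSC. -/
noncomputable def gallagerA_DE (dv dc : ℕ) (x ε α : ℝ) : ℝ :=
  ε * α ^ (dv - 1) +
    ∑ v ∈ Finset.Icc 1 (dv - 1),
      (Nat.choose (dv - 1) v : ℝ) * (1 - α) ^ v * α ^ (dv - 1 - v) *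
        ((1 - ε) * ((pMinus dc α x + p0 dc α) ^ v - p0 dc α ^ v -
            pMinus dc α x * p0 dc α ^ (v - 1)) +
         ε * (1 - (pPlus dc α x + p0 dc α) ^ v + p0 dc α ^ v +
            pPlus dc α x * p0 dc α ^ (v - 1)))

/-- For `ε ∈ (0,1/2)` and `α ∈ (0,1)`, the Gallager A DE map with missing
connections satisfies `f_GA(0,ε,α) ≥ ε·α^(dv-1) > 0`; in particular `0` is not
a fixed point, so the asymptotic error probability cannot be driven to zero. -/
theorem gallagerA_DE_zero_not_fixedPoint (dv dc : ℕ) (hdv : 2 ≤ dv) (hdc : 2 ≤ dc)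
    (ε α : ℝ) (hε : ε ∈ Set.Ioo (0 : ℝ) (1 / 2)) (hα : α ∈ Set.Ioo (0 : ℝ) 1) :
    ε * α ^ (dv - 1) ≤ gallagerA_DE dv dc 0 ε α ∧
    0 < ε * α ^ (dv - 1) ∧
    (0 : ℝ) ≠ gallagerA_DE dv dc 0 ε α := by
  obtain ⟨hε0, hε2⟩ := hε
  obtain ⟨hα0, hα1⟩ := hα
  set a : ℝ := (1 - α) ^ (dc - 1) with ha
  have ha0 : 0 ≤ a := pow_nonneg (by linarith) _
  have ha1 : a ≤ 1 := pow_le_one₀ (by linarith) (by linarith)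
  have hpM : pMinus dc α 0 = 0 := by simp [pMinus]
  have hpP : pPlus dc α 0 = a := by simp [pPlus, ha]; ring
  have hp0 : p0 dc α = 1 - a := by simp [p0, ha]
  have hsum : 0 ≤ ∑ v ∈ Finset.Icc 1 (dv - 1),
      (Nat.choose (dv - 1) v : ℝ) * (1 - α) ^ v * α ^ (dv - 1 - v) *
        ((1 - ε) * ((pMinus dc α 0 + p0 dc α) ^ v - p0 dc α ^ v -
            pMinus dc α 0 * p0 dc α ^ (v - 1)) +
         ε * (1 - (pPlus dc α 0 + p0 dc α) ^ v + p0 dc α ^ v +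
            pPlus dc α 0 * p0 dc α ^ (v - 1))) := by
    apply Finset.sum_nonneg
    intro v hv
    apply mul_nonneg
    · apply mul_nonneg
      apply mul_nonneg
      · positivity
      · exact pow_nonneg (by linarith) _
      · exact pow_nonneg (by linarith) _
    · rw [hpM, hpP, hp0]
      have h1 : a + (1 - a) = 1 := by ring
      rw [zero_add, h1, one_pow]
      have h2 : (0:ℝ) ≤ (1 - a) ^ v := pow_nonneg (by linarith) _
      have h3 : (0:ℝ) ≤ (1 - a) ^ (v - 1) := pow_nonneg (by linarith) _
      have : (1 - ε) * ((1 - a) ^ v - (1 - a) ^ v - 0 * (1 - a) ^ (v - 1)) = 0 := by ring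
      rw [this]
      have : (0:ℝ) ≤ ε * ((1 - a) ^ v + a * (1 - a) ^ (v - 1)) := by positivity
      nlinarith
  have hle : ε * α ^ (dv - 1) ≤ gallagerA_DE dv dc 0 ε α := by
    unfold gallagerA_DE
    linarith
  have hpos : 0 < ε * α ^ (dv - 1) := by positivity
  exact ⟨hle, hpos, by linarith⟩
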